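/- If ψ: ℝ^d → ℂ is a continuous negative definite function (Lévy exponent) with ψ(0)=0, and φ: ℝ^d → ℂ is the characteristic function of a probability measure μ on ℝ^d, and ψ(ξ)·φ(ξ) = 0 for all ξ ∈ ℝ^d, then ψ(ξ) = 0 for all ξ ∈ ℝ^d. -/

import Mathlib

open MeasureTheory Complex

lemma aux_norm_exp_bound (θ : ℝ) :
    ‖Complex.exp (Complex.I * θ) - 1 - Complex.I * θ‖ ≤ 3 * θ ^ 2 := by
  have hnorm : ‖(Complex.I * (θ : ℂ))‖ = |θ| := by
    rw [norm_mul, Complex.norm_I, one_mul, Complex.norm_real, Real.norm_eq_abs]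
  by_cases hθ : |θ| ≤ 1
  · have h := Complex.norm_exp_sub_one_sub_id_le (x := Complex.I * θ)
      (by rwa [hnorm])
    rw [hnorm] at h
    calc ‖Complex.exp (Complex.I * θ) - 1 - Complex.I * θ‖ ≤ |θ| ^ 2 := h
      _ = θ ^ 2 := sq_abs θ
      _ ≤ 3 * θ ^ 2 := by nlinarith [sq_nonneg θ]
  · push_neg at hθ
    have h1 : ‖Complex.exp (Complex.I * θ)‖ = 1 := by
      rw [Complex.norm_exp]
      simp
    have h2 : ‖Complex.exp (Complex.I * θ) - 1 - Complex.I * θ‖ ≤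
        ‖Complex.exp (Complex.I * θ)‖ + ‖(1 : ℂ)‖ + ‖Complex.I * (θ:ℂ)‖ := by
      calc ‖Complex.exp (Complex.I * θ) - 1 - Complex.I * θ‖
          ≤ ‖Complex.exp (Complex.I * θ) - 1‖ + ‖Complex.I * (θ:ℂ)‖ := norm_sub_le _ _
        _ ≤ ‖Complex.exp (Complex.I * θ)‖ + ‖(1:ℂ)‖ + ‖Complex.I * (θ:ℂ)‖ := by
            gcongr; exact norm_sub_le _ _
    rw [h1, hnorm, norm_one] at h2
    nlinarith [abs_nonneg θ, _root_.sq_abs θ]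

lemma aux_norm_exp_sub_one (θ : ℝ) : ‖Complex.exp (Complex.I * θ) - 1‖ ≤ 2 := by
  have h1 : ‖Complex.exp (Complex.I * θ)‖ = 1 := by
    rw [Complex.norm_exp]; simp
  calc ‖Complex.exp (Complex.I * θ) - 1‖ ≤ ‖Complex.exp (Complex.I * θ)‖ + ‖(1:ℂ)‖ :=
        norm_sub_le _ _
    _ = 2 := by rw [h1, norm_one]; norm_num

lemma aux_re (θ : ℝ) (c : ℂ) (hc : c.im = 0) :
    (Complex.exp (Complex.I * θ) - 1 - Complex.I * θ * c).re = Real.cos θ - 1 := by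
  rw [mul_comm Complex.I (θ:ℂ)]
  simp [Complex.sub_re, Complex.exp_ofReal_mul_I_re, Complex.mul_re, Complex.mul_im, hc]

/-- A Lévy exponent on `ℝ^d`: a function of Lévy–Khintchine form with drift `ℓ`,
positive semidefinite `Q` and Lévy measure `N`. -/
def IsLevyExponent {d : ℕ} (ψ : EuclideanSpace ℝ (Fin d) → ℂ) : Prop :=
  ∃ (ℓ : EuclideanSpace ℝ (Fin d))
    (Q : EuclideanSpace ℝ (Fin d) →L[ℝ] EuclideanSpace ℝ (Fin d))
    (N : Measure (EuclideanSpace ℝ (Fin d))),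
    (∀ ξ, 0 ≤ (inner ℝ ξ (Q ξ) : ℝ)) ∧ N {0} = 0 ∧
    Integrable (fun y => min 1 (‖y‖ ^ 2)) N ∧
    ∀ ξ, ψ ξ = -Complex.I * ((inner ℝ ℓ ξ : ℝ) : ℂ)
        + (1 / 2 : ℂ) * ((inner ℝ ξ (Q ξ) : ℝ) : ℂ)
        - ∫ y, (Complex.exp (Complex.I * ((inner ℝ ξ y : ℝ) : ℂ)) - 1
            - Complex.I * ((inner ℝ ξ y : ℝ) : ℂ) * (if ‖y‖ < 1 then (1 : ℂ) else 0)) ∂N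

/-- If `ψ` is a continuous Lévy exponent with `ψ 0 = 0` and `φ` is the characteristic
function of a probability measure `μ` with `ψ ξ * φ ξ = 0` for all `ξ`, then `ψ ≡ 0`. -/
theorem levy_exponent_zero_of_mul_charFun_zero {d : ℕ}
    (ψ φ : EuclideanSpace ℝ (Fin d) → ℂ)
    (hψ : IsLevyExponent ψ) (hψcont : Continuous ψ) (hψ0 : ψ 0 = 0)
    (μ : Measure (EuclideanSpace ℝ (Fin d))) [IsProbabilityMeasure μ]
    (hφ : ∀ ξ, φ ξ = ∫ x, Complex.exp (Complex.I * ((inner ℝ x ξ : ℝ) : ℂ)) ∂μ)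
    (h : ∀ ξ, ψ ξ * φ ξ = 0) :
    ∀ ξ, ψ ξ = 0 := by
  obtain ⟨ℓ, Q, N, hQ, hN0, hNint, hform⟩ := hψ
  have hφcont : Continuous φ := by
    have hc : Continuous fun ξ : EuclideanSpace ℝ (Fin d) =>
        ∫ x, Complex.exp (Complex.I * ((inner ℝ x ξ : ℝ) : ℂ)) ∂μ := by
      apply continuous_of_dominated (bound := fun _ => 1)
      · intro ξ
        exact (Complex.continuous_exp.comp
          (continuous_const.mul (Complex.continuous_ofReal.comp
            ((continuous_id.inner continuous_const))))).aestronglyMeasurable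
      · intro ξ
        filter_upwards with x
        rw [Complex.norm_exp]
        simp
      · exact integrable_const 1
      · filter_upwards with x
        exact Complex.continuous_exp.comp
          (continuous_const.mul (Complex.continuous_ofReal.comp
            ((continuous_const.inner continuous_id))))
    exact hc.congr fun ξ => (hφ ξ).symm
  have hφ0 : φ 0 = 1 := by
    rw [hφ 0]
    simp
  have hne : ∀ᶠ ξ in nhds 0, φ ξ ≠ 0 :=
    hφcont.continuousAt.eventually_ne (by rw [hφ0]; norm_num)
  rw [Metric.eventually_nhds_iff] at hne
  obtain ⟨ε, hε, hb⟩ := hne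
  have hball : ∀ ξ, ‖ξ‖ < ε → ψ ξ = 0 := by
    intro ξ hξ
    rcases mul_eq_zero.mp (h ξ) with h' | h'
    · exact h'
    · exact absurd h' (hb (by simpa [dist_zero_right] using hξ))
  set f : EuclideanSpace ℝ (Fin d) → EuclideanSpace ℝ (Fin d) → ℂ := fun ξ y =>
    Complex.exp (Complex.I * ((inner ℝ ξ y : ℝ) : ℂ)) - 1
      - Complex.I * ((inner ℝ ξ y : ℝ) : ℂ) * (if ‖y‖ < 1 then (1 : ℂ) else 0) with hf
  -- measurability
  have hmeas : ∀ ξ, AEStronglyMeasurable (f ξ) N := by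
    intro ξ
    apply Measurable.aestronglyMeasurable
    have h1 : Measurable fun y : EuclideanSpace ℝ (Fin d) => ((inner ℝ ξ y : ℝ) : ℂ) :=
      Complex.measurable_ofReal.comp (continuous_const.inner continuous_id).measurable
    have h2 : Measurable fun y : EuclideanSpace ℝ (Fin d) => (if ‖y‖ < 1 then (1:ℂ) else 0) := by
      apply Measurable.ite _ measurable_const measurable_const
      exact measurableSet_lt (continuous_norm.measurable) measurable_const
    exact ((Complex.measurable_exp.comp (measurable_const.mul h1)).sub measurable_const).sub
      ((measurable_const.mul h1).mul h2)
  -- integrability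
  have hint : ∀ ξ, Integrable (f ξ) N := by
    intro ξ
    apply Integrable.mono' (hNint.const_mul (3 * ‖ξ‖ ^ 2 + 2)) (hmeas ξ)
    filter_upwards with y
    have hcs : |(inner ℝ ξ y : ℝ)| ≤ ‖ξ‖ * ‖y‖ := abs_real_inner_le_norm ξ y
    by_cases hy : ‖y‖ < 1
    · have hmin : min 1 (‖y‖ ^ 2) = ‖y‖ ^ 2 := by
        apply min_eq_right; nlinarith [norm_nonneg y]
      simp only [hf, if_pos hy, mul_one]
      calc ‖Complex.exp (Complex.I * ((inner ℝ ξ y : ℝ):ℂ)) - 1 - Complex.I * ((inner ℝ ξ y : ℝ):ℂ)‖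
          ≤ 3 * (inner ℝ ξ y : ℝ) ^ 2 := aux_norm_exp_bound _
        _ ≤ (3 * ‖ξ‖ ^ 2 + 2) * min 1 (‖y‖ ^ 2) := by
            rw [hmin]
            have habs := abs_le.mp hcs
            have hsq : (inner ℝ ξ y : ℝ) ^ 2 ≤ ‖ξ‖ ^ 2 * ‖y‖ ^ 2 := by
              nlinarith [habs.1, habs.2]
            nlinarith [sq_nonneg ‖y‖]
    · have hmin : min 1 (‖y‖ ^ 2) = 1 := by
        apply min_eq_left; push_neg at hy; nlinarith
      simp only [hf, if_neg hy, mul_zero, sub_zero]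
      calc ‖Complex.exp (Complex.I * ((inner ℝ ξ y : ℝ):ℂ)) - 1‖ ≤ 2 := aux_norm_exp_sub_one _
        _ ≤ (3 * ‖ξ‖ ^ 2 + 2) * min 1 (‖y‖ ^ 2) := by rw [hmin]; nlinarith [sq_nonneg ‖ξ‖]
  -- key : on the ball, Q-form vanishes and cos = 1 a.e.
  have key : ∀ ξ, ‖ξ‖ < ε → (inner ℝ ξ (Q ξ) : ℝ) = 0 ∧
      (∀ᵐ y ∂N, Real.cos (inner ℝ ξ y : ℝ) = 1) := by
    intro ξ hξ
    have h0 : (0:ℂ) = -Complex.I * ((inner ℝ ℓ ξ : ℝ) : ℂ)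
        + (1 / 2 : ℂ) * ((inner ℝ ξ (Q ξ) : ℝ) : ℂ) - ∫ y, f ξ y ∂N := by
      rw [← hform ξ, hball ξ hξ]
    have hre0 := congrArg Complex.re h0
    have hrei : ∫ y, (f ξ y).re ∂N = (∫ y, f ξ y ∂N).re := integral_re (hint ξ)
    simp only [Complex.sub_re, Complex.add_re, Complex.mul_re, Complex.neg_re,
      Complex.neg_im, Complex.I_re, Complex.I_im, Complex.ofReal_re, Complex.ofReal_im,
      Complex.zero_re] at hre0
    -- hre0 : 0 = ... ; normalize
    have hintre : Integrable (fun y => 1 - Real.cos (inner ℝ ξ y : ℝ)) N := by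
      have := ((hint ξ).re).neg
      apply this.congr
      filter_upwards with y
      have h3 : (f ξ y).re = Real.cos (inner ℝ ξ y : ℝ) - 1 := by
        apply aux_re
        split_ifs <;> simp
      simp only [Pi.neg_apply]
      rw [show RCLike.re (f ξ y) = (f ξ y).re from rfl, h3]; ring
    have hre_eq : ∫ y, (f ξ y).re ∂N = - ∫ y, (1 - Real.cos (inner ℝ ξ y : ℝ)) ∂N := by
      rw [← integral_neg]
      apply integral_congr_ae
      filter_upwards with y
      have : (f ξ y).re = Real.cos (inner ℝ ξ y : ℝ) - 1 := by
        apply aux_re; split_ifs <;> simp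
      rw [this]; ring
    have hnn : 0 ≤ ∫ y, (1 - Real.cos (inner ℝ ξ y : ℝ)) ∂N := by
      apply integral_nonneg
      intro y
      simp [Real.cos_le_one]
    -- combine: 0 = (1/2)⟨ξ,Qξ⟩ + ∫(1-cos)
    have hmain : (1/2) * (inner ℝ ξ (Q ξ) : ℝ) + ∫ y, (1 - Real.cos (inner ℝ ξ y : ℝ)) ∂N = 0 := by
      have := hre_eq
      rw [hrei] at this
      have h0' := congrArg Complex.re h0
      rw [show ((-Complex.I * ((inner ℝ ℓ ξ : ℝ) : ℂ)
        + (1 / 2 : ℂ) * ((inner ℝ ξ (Q ξ) : ℝ) : ℂ) - ∫ y, f ξ y ∂N).re)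
        = (1/2) * (inner ℝ ξ (Q ξ) : ℝ) - (∫ y, f ξ y ∂N).re by
          simp [Complex.sub_re, Complex.add_re, Complex.mul_re, Complex.div_re]] at h0'
      rw [this] at h0'
      simp only [Complex.zero_re] at h0'
      linarith
    have hQ0 : (inner ℝ ξ (Q ξ) : ℝ) = 0 := by
      have := hQ ξ
      linarith
    refine ⟨hQ0, ?_⟩
    have hz : ∫ y, (1 - Real.cos (inner ℝ ξ y : ℝ)) ∂N = 0 := by
      rw [hQ0] at hmain; linarith
    have := (integral_eq_zero_iff_of_nonneg (fun y => by simp [Real.cos_le_one]) hintre).mp hz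
    filter_upwards [this] with y hy
    simp only [Pi.zero_apply] at hy
    linarith
  -- N = 0
  have hNzero : N = 0 := by
    have hae : ∀ᵐ y ∂N, ∀ p : Fin d × ℕ,
        Real.cos ((ε / (2 * (p.2 + 1))) * y p.1) = 1 := by
      rw [ae_all_iff]
      rintro ⟨i, n⟩
      have hc : (0:ℝ) < ε / (2 * (n + 1)) := by positivity
      have hlt : ‖(ε / (2 * (n + 1))) • (EuclideanSpace.single i (1:ℝ))‖ < ε := by
        rw [norm_smul, EuclideanSpace.norm_single]
        simp only [norm_one, mul_one, Real.norm_eq_abs, abs_of_pos hc]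
        rw [div_lt_iff₀ (by positivity)]
        nlinarith [Nat.cast_nonneg (α := ℝ) n, mul_nonneg hε.le (Nat.cast_nonneg (α := ℝ) n)]
      have := (key _ hlt).2
      filter_upwards [this] with y hy
      rwa [real_inner_smul_left, EuclideanSpace.inner_single_left, map_one, one_mul] at hy
    have hae0 : ∀ᵐ y ∂N, y = 0 := by
      filter_upwards [hae] with y hy
      ext i
      by_contra hyi
      have hyi' : y i ≠ 0 := by simpa using hyi
      obtain ⟨n, hn⟩ := exists_nat_gt (ε * |y i| / (2 * (2 * Real.pi)))
      have hπ := Real.pi_pos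
      have hc : (0:ℝ) < ε / (2 * (n + 1)) := by positivity
      have habs : |(ε / (2 * (n + 1))) * y i| < 2 * Real.pi := by
        rw [abs_mul, abs_of_pos hc]
        rw [div_mul_eq_mul_div, div_lt_iff₀ (by positivity)]
        have hn' : ε * |y i| < ↑n * (2 * (2 * Real.pi)) := (div_lt_iff₀ (by positivity)).mp hn
        nlinarith [hπ, hn']
      have hne : (ε / (2 * (n + 1))) * y i ≠ 0 := mul_ne_zero (ne_of_gt hc) hyi'
      have hcos := hy ⟨i, n⟩
      rw [Real.cos_eq_one_iff] at hcos
      obtain ⟨m, hm⟩ := hcos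
      have hm0 : m = 0 := by
        by_contra hm0ne
        have h1m : (1:ℝ) ≤ |(m:ℝ)| := by
          have := Int.one_le_abs (z := m) hm0ne
          calc (1:ℝ) ≤ ((|m| : ℤ) : ℝ) := by exact_mod_cast this
            _ = |(m:ℝ)| := by push_cast; ring
        have h2m : 2 * Real.pi ≤ |(m:ℝ) * (2 * Real.pi)| := by
          rw [abs_mul, abs_of_pos Real.two_pi_pos]
          nlinarith [Real.two_pi_pos]
        rw [hm] at h2m
        linarith
      rw [hm0] at hm
      simp only [Int.cast_zero, zero_mul] at hm
      exact hne hm.symm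
    have hcompl : N {y | ¬ y = 0} = 0 := ae_iff.mp hae0
    have : N Set.univ = 0 := by
      have : (Set.univ : Set (EuclideanSpace ℝ (Fin d))) = {0} ∪ {y | ¬ y = 0} := by
        ext y; simp [em]
      rw [this]
      exact le_antisymm (le_trans (measure_union_le _ _) (by rw [hN0, hcompl]; simp)) (zero_le)
    exact Measure.measure_univ_eq_zero.mp this
  -- conclude
  rw [hNzero] at hform
  simp only [integral_zero_measure, sub_zero] at hform
  -- Q form vanishes everywhere
  have hQall : ∀ ξ, (inner ℝ ξ (Q ξ) : ℝ) = 0 := by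
    intro ξ
    by_cases hz : ξ = 0
    · simp [hz]
    · have hnorm : 0 < ‖ξ‖ := norm_pos_iff.mpr hz
      set c := ε / (2 * ‖ξ‖) with hc
      have hcpos : 0 < c := by positivity
      have hlt : ‖c • ξ‖ < ε := by
        rw [norm_smul, Real.norm_eq_abs, abs_of_pos hcpos, hc]
        rw [div_mul_eq_mul_div, div_lt_iff₀ (by positivity)]
        nlinarith
      have := (key _ hlt).1
      rw [_root_.map_smul, real_inner_smul_left, real_inner_smul_right] at this
      rcases mul_eq_zero.mp this with hcz | h
      · exact absurd hcz (ne_of_gt hcpos)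
      · rcases mul_eq_zero.mp h with hcz | h'
        · exact absurd hcz (ne_of_gt hcpos)
        · exact h'
  -- ℓ form vanishes everywhere
  have hℓall : ∀ ξ, (inner ℝ ℓ ξ : ℝ) = 0 := by
    intro ξ
    by_cases hz : ξ = 0
    · simp [hz]
    · have hnorm : 0 < ‖ξ‖ := norm_pos_iff.mpr hz
      set c := ε / (2 * ‖ξ‖) with hc
      have hcpos : 0 < c := by positivity
      have hlt : ‖c • ξ‖ < ε := by
        rw [norm_smul, Real.norm_eq_abs, abs_of_pos hcpos, hc]
        rw [div_mul_eq_mul_div, div_lt_iff₀ (by positivity)]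
        nlinarith
      have h1 := hball _ hlt
      rw [hform] at h1
      rw [hQall] at h1
      simp only [Complex.ofReal_zero, mul_zero, add_zero] at h1
      have : ((inner ℝ ℓ (c • ξ) : ℝ) : ℂ) = 0 := by
        rcases mul_eq_zero.mp h1 with hI | hr
        · exact absurd hI (by simp [Complex.I_ne_zero])
        · exact hr
      have : (inner ℝ ℓ (c • ξ) : ℝ) = 0 := by exact_mod_cast this
      rw [real_inner_smul_right] at this
      have : c * (inner ℝ ℓ ξ : ℝ) = 0 := by exact_mod_cast this
      rcases mul_eq_zero.mp this with h | h
      · exact absurd h (ne_of_gt hcpos)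
      · exact h
  intro ξ
  rw [hform ξ, hℓall ξ, hQall ξ]
  simp
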